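/- Let K be an algebraically closed field equipped with a real-valued valuation v, with valuation ring O_v, maximal ideal 𝔪_v and residue field Δ. Let I ⊆ K[x_0,…,x_n] be a homogeneous ideal, and let Ī ⊆ Δ[x_0,…,x_n] be the image, under coefficientwise reduction O_v[x_0,…,x_n] → Δ[x_0,…,x_n], of the set of polynomials in I all of whose coefficients lie in O_v. Then Ī is a homogeneous ideal of Δ[x_0,…,x_n] and, for every degree d, dim_Δ(Ī_d) = dim_K(I_d); in particular Ī has the same Hilbert function as I. -/

import Mathlib

open MvPolynomial

/-- `v : K → ℝ` is a real-valued valuation on the field `K`.  This encodes the usual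
notion of a map `v : K → ℝ ∪ {∞}` with `v x = ∞ ↔ x = 0`, `v (x*y) = v x + v y` and
`v (x+y) ≥ min (v x) (v y)`: the value of `v` at `0` is irrelevant (it "is" `∞`), and
all the axioms involving `0` are automatic. -/
def IsRealValuation {K : Type*} [Field K] (v : K → ℝ) : Prop :=
  (∀ x y : K, x ≠ 0 → y ≠ 0 → v (x * y) = v x + v y) ∧
  (∀ x y : K, x ≠ 0 → y ≠ 0 → x + y ≠ 0 → min (v x) (v y) ≤ v (x + y))

theorem IsRealValuation.v_one {K : Type*} [Field K] {v : K → ℝ}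
    (hv : IsRealValuation v) : v 1 = 0 := by
  have h := hv.1 1 1 one_ne_zero one_ne_zero
  simp only [one_mul] at h
  linarith

theorem IsRealValuation.v_neg {K : Type*} [Field K] {v : K → ℝ}
    (hv : IsRealValuation v) (x : K) (hx : x ≠ 0) : v (-x) = v x := by
  have h1 : v ((-1 : K) * (-1 : K)) = v (-1 : K) + v (-1 : K) :=
    hv.1 (-1) (-1) (by norm_num) (by norm_num)
  have h2 : v (-1 : K) = 0 := by
    rw [neg_one_mul, neg_neg, hv.v_one] at h1; linarith
  have h3 : v ((-1 : K) * x) = v (-1 : K) + v x := hv.1 (-1) x (by norm_num) hx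
  rw [neg_one_mul] at h3
  rw [h3, h2, zero_add]

/-- The valuation ring `O_v = { x | v x ≥ 0 }` (together with `0`). -/
def valuationSubring {K : Type*} [Field K] (v : K → ℝ) (hv : IsRealValuation v) :
    Subring K where
  carrier := { x : K | x = 0 ∨ 0 ≤ v x }
  zero_mem' := Or.inl rfl
  one_mem' := Or.inr (le_of_eq hv.v_one.symm)
  mul_mem' := by
    rintro x y (rfl | hx) hy
    · exact Or.inl (zero_mul _)
    rcases hy with rfl | hy
    · exact Or.inl (mul_zero _)
    by_cases hx0 : x = 0
    · exact Or.inl (by rw [hx0, zero_mul])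
    by_cases hy0 : y = 0
    · exact Or.inl (by rw [hy0, mul_zero])
    · exact Or.inr (by rw [hv.1 x y hx0 hy0]; positivity)
  add_mem' := by
    rintro x y hx hy
    by_cases hxy : x + y = 0
    · exact Or.inl hxy
    rcases hx with rfl | hx
    · rw [zero_add] at hxy ⊢; exact hy
    rcases hy with rfl | hy
    · rw [add_zero] at hxy ⊢; exact Or.inr hx
    by_cases hx0 : x = 0
    · subst hx0; rw [zero_add] at hxy ⊢; exact Or.inr hy
    by_cases hy0 : y = 0
    · subst hy0; rw [add_zero] at hxy ⊢; exact Or.inr hx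
    · exact Or.inr (le_trans (le_min hx hy) (hv.2 x y hx0 hy0 hxy))
  neg_mem' := by
    rintro x (rfl | hx)
    · exact Or.inl neg_zero
    by_cases hx0 : x = 0
    · exact Or.inl (by rw [hx0, neg_zero])
    · exact Or.inr (by rw [hv.v_neg x hx0]; exact hx)

/-- The maximal ideal `𝔪_v = { x | v x > 0 }` (together with `0`) of the valuation
ring. -/
def valuationMaxIdeal {K : Type*} [Field K] (v : K → ℝ) (hv : IsRealValuation v) :
    Ideal (valuationSubring v hv) where
  carrier := { x : valuationSubring v hv | (x : K) = 0 ∨ 0 < v (x : K) }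
  zero_mem' := Or.inl rfl
  add_mem' := by
    rintro a b ha hb
    have ha' : (a : K) = 0 ∨ 0 < v (a : K) := ha
    have hb' : (b : K) = 0 ∨ 0 < v (b : K) := hb
    have hcoe : ((a + b : valuationSubring v hv) : K) = (a : K) + (b : K) := by
      push_cast; ring
    show ((a + b : valuationSubring v hv) : K) = 0 ∨ 0 < v ((a + b : valuationSubring v hv) : K)
    by_cases ha0 : (a : K) = 0
    · rw [hcoe, ha0, zero_add]; exact hb'
    by_cases hb0 : (b : K) = 0
    · rw [hcoe, hb0, add_zero]; exact ha'
    by_cases hab : (a : K) + (b : K) = 0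
    · exact Or.inl (by rw [hcoe]; exact hab)
    refine Or.inr ?_
    rw [hcoe]
    exact lt_of_lt_of_le (lt_min (ha'.resolve_left ha0) (hb'.resolve_left hb0))
      (hv.2 _ _ ha0 hb0 hab)
  smul_mem' := by
    rintro c x hx
    have hx' : (x : K) = 0 ∨ 0 < v (x : K) := hx
    have hcoe : ((c • x : valuationSubring v hv) : K) = (c : K) * (x : K) := rfl
    show ((c • x : valuationSubring v hv) : K) = 0 ∨ 0 < v ((c • x : valuationSubring v hv) : K)
    by_cases hx0 : (x : K) = 0
    · exact Or.inl (by rw [hcoe, hx0, mul_zero])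
    by_cases hc0 : (c : K) = 0
    · exact Or.inl (by rw [hcoe, hc0, zero_mul])
    refine Or.inr ?_
    rw [hcoe, hv.1 _ _ hc0 hx0]
    have hc : (c : K) = 0 ∨ 0 ≤ v (c : K) := c.2
    have := hc.resolve_left hc0
    have := hx'.resolve_left hx0
    linarith

/-- The residue field `Δ = O_v / 𝔪_v`. -/
abbrev residueField {K : Type*} [Field K] (v : K → ℝ) (hv : IsRealValuation v) :=
  valuationSubring v hv ⧸ valuationMaxIdeal v hv

/-- A homogeneous ideal: one containing all homogeneous components of its elements. -/
def IsHomogeneousIdeal {R : Type*} [CommSemiring R] {n : ℕ}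
    (I : Ideal (MvPolynomial (Fin n) R)) : Prop :=
  ∀ f ∈ I, ∀ d : ℕ, MvPolynomial.homogeneousComponent d f ∈ I

/-- `I_d`: the degree-`d` homogeneous component of the ideal `I`, as an `R`-submodule. -/
noncomputable def idealComponent {R : Type*} [CommRing R] {n : ℕ}
    (I : Ideal (MvPolynomial (Fin n) R)) (d : ℕ) : Submodule R (MvPolynomial (Fin n) R) :=
  (homogeneousSubmodule (Fin n) R d) ⊓ (Submodule.restrictScalars R I)

set_option synthInstance.maxHeartbeats 1000000 in
/-- `Ī`: the image in `Δ[x_0,…,x_n]`, under coefficientwise reduction modulo `𝔪_v`, of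
the set of polynomials of `I` all of whose coefficients lie in `O_v`.  (A polynomial of
`K[x_0,…,x_n]` with all coefficients in `O_v` is the same thing as the image of a
polynomial over `O_v` under the coefficientwise inclusion `O_v → K`.) -/
def reducedIdealSet {K : Type*} [Field K] (v : K → ℝ) (hv : IsRealValuation v) {n : ℕ}
    (I : Ideal (MvPolynomial (Fin n) K)) :
    Set (MvPolynomial (Fin n) (residueField v hv)) :=
  (MvPolynomial.map (Ideal.Quotient.mk (valuationMaxIdeal v hv))) ''
    { g : MvPolynomial (Fin n) (valuationSubring v hv) |
      MvPolynomial.map (valuationSubring v hv).subtype g ∈ I }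

set_option synthInstance.maxHeartbeats 1000000
set_option maxHeartbeats 1000000

section Auxiliary

open MvPolynomial

variable {K : Type*} [Field K] {v : K → ℝ}

theorem IsRealValuation.v_inv (hv : IsRealValuation v) {x : K} (hx : x ≠ 0) :
    v x⁻¹ = - v x := by
  have h := hv.1 x x⁻¹ hx (inv_ne_zero hx)
  rw [mul_inv_cancel₀ hx, hv.v_one] at h
  linarith

theorem valuationMaxIdeal_isMaximal (hv : IsRealValuation v) :
    (valuationMaxIdeal v hv).IsMaximal := by
  rw [Ideal.isMaximal_iff]
  constructor
  · rintro (h | h)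
    · exact one_ne_zero (α := K) h
    · rw [show ((1 : valuationSubring v hv) : K) = 1 from rfl, hv.v_one] at h
      exact lt_irrefl _ h
  · rintro J x hmJ hxm hxJ
    have hx' : ¬((x : K) = 0 ∨ 0 < v (x : K)) := hxm
    push_neg at hx'
    obtain ⟨hx0, hxle⟩ := hx'
    have hxge : 0 ≤ v (x : K) := x.2.resolve_left hx0
    have hinv : v (x : K)⁻¹ = 0 := by
      rw [hv.v_inv hx0]; linarith
    have hmem : (x : K)⁻¹ ∈ valuationSubring v hv := Or.inr (le_of_eq hinv.symm)
    have hone : (⟨(x : K)⁻¹, hmem⟩ * x : valuationSubring v hv) = 1 :=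
      Subtype.ext (inv_mul_cancel₀ hx0)
    exact hone ▸ J.mul_mem_left _ hxJ

theorem exists_scale (hv : IsRealValuation v) {σ : Type*} (p : MvPolynomial σ K)
    (hp : p ≠ 0) :
    ∃ (c : K) (m0 : σ →₀ ℕ), c ≠ 0 ∧
      (∀ m, coeff m (c • p) ∈ valuationSubring v hv) ∧ coeff m0 (c • p) = 1 := by
  obtain ⟨m0, hm0, hmin⟩ :=
    p.support.exists_min_image (fun m => v (coeff m p)) (support_nonempty.mpr hp)
  have h0 : coeff m0 p ≠ 0 := mem_support_iff.mp hm0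
  refine ⟨(coeff m0 p)⁻¹, m0, inv_ne_zero h0, ?_, ?_⟩
  · intro m
    rw [coeff_smul, smul_eq_mul]
    by_cases hm : coeff m p = 0
    · rw [hm, mul_zero]; exact Or.inl rfl
    · refine Or.inr ?_
      rw [hv.1 _ _ (inv_ne_zero h0) hm, hv.v_inv h0]
      have := hmin m (mem_support_iff.mpr hm)
      linarith
  · rw [coeff_smul, smul_eq_mul, inv_mul_cancel₀ h0]

theorem exists_lift (hv : IsRealValuation v) {σ : Type*} (p : MvPolynomial σ K)
    (hp : ∀ m, coeff m p ∈ valuationSubring v hv) :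
    ∃ g : MvPolynomial σ (valuationSubring v hv),
      MvPolynomial.map (valuationSubring v hv).subtype g = p := by
  classical
  refine ⟨∑ m ∈ p.support, monomial m (⟨coeff m p, hp m⟩ : valuationSubring v hv), ?_⟩
  rw [map_sum]
  simp only [map_monomial, Subring.coe_subtype]
  exact p.support_sum_monomial_coeff

theorem mvmap_smul {σ R S : Type*} [CommSemiring R] [CommSemiring S] (f : R →+* S)
    (a : R) (g : MvPolynomial σ R) :
    MvPolynomial.map f (a • g) = f a • MvPolynomial.map f g := by
  rw [smul_eq_C_mul, map_mul, MvPolynomial.map_C, ← smul_eq_C_mul]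

theorem mvmap_homogeneousComponent {σ R S : Type*} [CommSemiring R] [CommSemiring S]
    (f : R →+* S) (d : ℕ) (p : MvPolynomial σ R) :
    MvPolynomial.map f (homogeneousComponent d p)
      = homogeneousComponent d (MvPolynomial.map f p) := by
  ext m
  rw [coeff_map, coeff_homogeneousComponent, coeff_homogeneousComponent, coeff_map]
  split_ifs <;> simp

theorem echelon_linearIndependent {F σ : Type*} [Field F] {r : ℕ}
    (q : Fin r → MvPolynomial σ F) (ms : Fin r → (σ →₀ ℕ))
    (h1 : ∀ i, coeff (ms i) (q i) = 1)
    (h0 : ∀ i j, j < i → coeff (ms j) (q i) = 0) :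
    LinearIndependent F q := by
  classical
  rw [Fintype.linearIndependent_iff]
  intro c hc
  by_contra hne
  push_neg at hne
  obtain ⟨i, hi⟩ := hne
  set s : Finset (Fin r) := Finset.univ.filter (fun j => c j ≠ 0) with hs
  have hsne : s.Nonempty := ⟨i, by simp [hs, hi]⟩
  obtain ⟨i0, hi0s, hmin⟩ := s.exists_min_image id hsne
  have hci0 : c i0 ≠ 0 := by
    have := hi0s; simp [hs] at this; exact this
  have hc0 : coeff (ms i0) (∑ j, c j • q j) = 0 := by rw [hc, coeff_zero]
  rw [coeff_sum] at hc0
  simp only [coeff_smul, smul_eq_mul] at hc0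
  rw [Finset.sum_eq_single i0] at hc0
  · rw [h1 i0, mul_one] at hc0
    exact hci0 hc0
  · intro j _ hj
    by_cases hcj : c j = 0
    · rw [hcj, zero_mul]
    · have hle : i0 ≤ j := hmin j (by simp [hs, hcj])
      have hlt : i0 < j := lt_of_le_of_ne hle (Ne.symm hj)
      rw [h0 j i0 hlt, mul_zero]
  · intro h; exact absurd (Finset.mem_univ i0) h

theorem lifts_linearIndependent (hv : IsRealValuation v) {σ : Type*} {r : ℕ}
    (g : Fin r → MvPolynomial σ (valuationSubring v hv))
    (hind : LinearIndependent (residueField v hv)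
      (fun i => MvPolynomial.map (Ideal.Quotient.mk (valuationMaxIdeal v hv)) (g i))) :
    LinearIndependent K (fun i => MvPolynomial.map (valuationSubring v hv).subtype (g i)) := by
  classical
  haveI := valuationMaxIdeal_isMaximal hv
  letI := Ideal.Quotient.field (valuationMaxIdeal v hv)
  rw [Fintype.linearIndependent_iff] at hind ⊢
  intro c hc
  by_contra hne
  push_neg at hne
  obtain ⟨i, hi⟩ := hne
  set s : Finset (Fin r) := Finset.univ.filter (fun j => c j ≠ 0) with hs
  have hsne : s.Nonempty := ⟨i, by simp [hs, hi]⟩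
  obtain ⟨i0, hi0s, hmin⟩ := s.exists_min_image (fun j => v (c j)) hsne
  have hci0 : c i0 ≠ 0 := by
    have := hi0s; simp [hs] at this; exact this
  have hmem : ∀ j, (c i0)⁻¹ * c j ∈ valuationSubring v hv := by
    intro j
    by_cases hj : c j = 0
    · rw [hj, mul_zero]; exact Or.inl rfl
    · refine Or.inr ?_
      rw [hv.1 _ _ (inv_ne_zero hci0) hj, hv.v_inv hci0]
      have := hmin j (by simp [hs, hj])
      linarith
  set dO : Fin r → valuationSubring v hv := fun j => ⟨(c i0)⁻¹ * c j, hmem j⟩ with hdO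
  have hsum : (∑ j, dO j • g j) = 0 := by
    apply MvPolynomial.map_injective (valuationSubring v hv).subtype Subtype.coe_injective
    rw [map_sum, map_zero]
    have heach : ∀ j, MvPolynomial.map (valuationSubring v hv).subtype (dO j • g j)
        = (c i0)⁻¹ • (c j • MvPolynomial.map (valuationSubring v hv).subtype (g j)) := by
      intro j
      rw [mvmap_smul]
      show ((c i0)⁻¹ * c j) • _ = _
      rw [mul_smul]
    simp_rw [heach]
    rw [← Finset.smul_sum, hc, smul_zero]
  have hzero := hind (fun j => Ideal.Quotient.mk (valuationMaxIdeal v hv) (dO j)) (by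
    have h := congrArg (MvPolynomial.map (Ideal.Quotient.mk (valuationMaxIdeal v hv))) hsum
    rw [map_sum, map_zero] at h
    simpa [mvmap_smul] using h)
  have hd1 : dO i0 = 1 := Subtype.ext (by
    show (c i0)⁻¹ * c i0 = 1
    exact inv_mul_cancel₀ hci0)
  have hzi : Ideal.Quotient.mk (valuationMaxIdeal v hv) (dO i0) = 0 := hzero i0
  rw [hd1, map_one] at hzi
  exact one_ne_zero hzi

theorem homogeneousSubmodule_finiteDimensional (F : Type*) [Field F] {σ : Type*}
    [Finite σ] (d : ℕ) :
    FiniteDimensional F (homogeneousSubmodule σ F d) := by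
  apply Submodule.finiteDimensional_of_le (S₂ := restrictTotalDegree σ F d)
  intro p hp
  rw [mem_restrictTotalDegree]
  exact ((mem_homogeneousSubmodule _ _).mp hp).totalDegree_le

theorem exists_echelon (hv : IsRealValuation v) {σ : Type*} (r : ℕ) :
    ∀ (W : Submodule K (MvPolynomial σ K)), FiniteDimensional K W →
      Module.finrank K W = r →
    ∃ (g : Fin r → MvPolynomial σ (valuationSubring v hv))
      (ms : Fin r → (σ →₀ ℕ)),
      (∀ i, MvPolynomial.map (valuationSubring v hv).subtype (g i) ∈ W) ∧
      (∀ i, coeff (ms i) (g i) = 1) ∧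
      (∀ i j, j < i → coeff (ms j) (g i) = 0) := by
  induction r with
  | zero =>
    intro W _ _
    exact ⟨Fin.elim0, Fin.elim0, fun i => i.elim0, fun i => i.elim0, fun i => i.elim0⟩
  | succ r ih =>
    intro W hfd hr
    have hWbot : W ≠ ⊥ := by
      intro h
      rw [h, finrank_bot] at hr
      exact Nat.succ_ne_zero r hr.symm
    obtain ⟨p, hpW, hp0⟩ := Submodule.exists_mem_ne_zero_of_ne_bot hWbot
    obtain ⟨c, m0, hc0, hcoe, hone⟩ := exists_scale hv p hp0
    have hqW : c • p ∈ W := W.smul_mem c hpW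
    obtain ⟨u, hu⟩ := exists_lift hv (c • p) hcoe
    have hu1 : coeff m0 u = 1 := by
      have h2 : (valuationSubring v hv).subtype (coeff m0 u)
          = (valuationSubring v hv).subtype 1 := by
        rw [← MvPolynomial.coeff_map, hu, hone, map_one]
      exact Subtype.ext h2
    set L : MvPolynomial σ K →ₗ[K] K := lcoeff K m0 with hL
    set f : ↥W →ₗ[K] K := L.comp W.subtype with hf
    have hfr : LinearMap.range f = ⊤ := by
      rw [eq_top_iff]
      rintro x -
      refine ⟨x • ⟨c • p, hqW⟩, ?_⟩
      show L (x • (c • p)) = x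
      rw [map_smul, hL]
      simp only [lcoeff_apply]
      rw [hone, smul_eq_mul, mul_one]
    have hker : Module.finrank K (LinearMap.ker f) = r := by
      have hrn := LinearMap.finrank_range_add_finrank_ker f
      rw [hfr, finrank_top, Module.finrank_self, hr] at hrn
      omega
    have hkereq : LinearMap.ker f
        = Submodule.comap W.subtype (W ⊓ LinearMap.ker L) := by
      rw [Submodule.comap_inf, Submodule.comap_subtype_self, top_inf_eq]
      rfl
    set W' : Submodule K (MvPolynomial σ K) := W ⊓ LinearMap.ker L with hW'
    have hW'le : W' ≤ W := inf_le_left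
    have hW'fd : FiniteDimensional K W' := Submodule.finiteDimensional_of_le hW'le
    have hW'r : Module.finrank K W' = r := by
      rw [← hker, hkereq]
      exact (Submodule.comapSubtypeEquivOfLe hW'le).finrank_eq.symm
    obtain ⟨g', ms', hmem', h1', h0'⟩ := ih W' hW'fd hW'r
    refine ⟨Fin.cons u g', Fin.cons m0 ms', ?_, ?_, ?_⟩
    · intro i
      refine Fin.cases ?_ ?_ i
      · rw [Fin.cons_zero, hu]; exact hqW
      · intro j
        rw [Fin.cons_succ]
        exact hW'le (hmem' j)
    · intro i
      refine Fin.cases ?_ ?_ i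
      · rw [Fin.cons_zero, Fin.cons_zero]; exact hu1
      · intro j
        rw [Fin.cons_succ, Fin.cons_succ]
        exact h1' j
    · intro i
      refine Fin.cases ?_ ?_ i
      · intro j hj
        exact absurd hj (Nat.not_lt_zero j.val)
      · intro i' j
        refine Fin.cases ?_ ?_ j
        · intro _
          rw [Fin.cons_zero, Fin.cons_succ]
          have hmemker : MvPolynomial.map (valuationSubring v hv).subtype (g' i')
              ∈ LinearMap.ker L := (hmem' i').2
          have hLz : coeff m0 (MvPolynomial.map (valuationSubring v hv).subtype (g' i')) = 0 :=
            hmemker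
          rw [coeff_map] at hLz
          exact Subtype.coe_injective hLz
        · intro j' hj'
          rw [Fin.cons_succ, Fin.cons_succ]
          exact h0' i' j' (by
            have := hj'
            rwa [Fin.succ_lt_succ_iff] at this)

end Auxiliary

set_option synthInstance.maxHeartbeats 1000000 in
set_option maxHeartbeats 1000000 in
/-- For a homogeneous ideal `I ⊆ K[x_0,…,x_n]`, the reduction `Ī` is a
homogeneous ideal of `Δ[x_0,…,x_n]` with the same Hilbert function as `I`, i.e.
`dim_Δ (Ī_d) = dim_K (I_d)` for every `d`. -/
theorem reducedIdeal_isHomogeneous_and_same_hilbert_function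
    {K : Type*} [Field K] [IsAlgClosed K] (v : K → ℝ) (hv : IsRealValuation v)
    {n : ℕ} (I : Ideal (MvPolynomial (Fin (n + 1)) K)) (hIhom : IsHomogeneousIdeal I) :
    ∃ Ibar : Ideal (MvPolynomial (Fin (n + 1)) (residueField v hv)),
      (Ibar : Set (MvPolynomial (Fin (n + 1)) (residueField v hv))) =
        reducedIdealSet v hv I ∧
      IsHomogeneousIdeal Ibar ∧
      ∀ d : ℕ, Module.finrank (residueField v hv) (idealComponent Ibar d) =
        Module.finrank K (idealComponent I d) := by
  classical
  haveI hmax : (valuationMaxIdeal v hv).IsMaximal := valuationMaxIdeal_isMaximal hv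
  letI : Field (residueField v hv) := Ideal.Quotient.field (valuationMaxIdeal v hv)
  set O := valuationSubring v hv with hO
  set π : valuationSubring v hv →+* residueField v hv :=
    Ideal.Quotient.mk (valuationMaxIdeal v hv) with hπ
  set φ : MvPolynomial (Fin (n + 1)) (valuationSubring v hv)
      →+* MvPolynomial (Fin (n + 1)) K := MvPolynomial.map O.subtype with hφ
  set ψ : MvPolynomial (Fin (n + 1)) (valuationSubring v hv)
      →+* MvPolynomial (Fin (n + 1)) (residueField v hv) := MvPolynomial.map π with hψ
  have hψs : Function.Surjective ψ :=
    MvPolynomial.map_surjective π Ideal.Quotient.mk_surjective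
  have hφi : Function.Injective φ :=
    MvPolynomial.map_injective O.subtype Subtype.coe_injective
  refine ⟨Ideal.map ψ (I.comap φ), ?_, ?_, ?_⟩
  · -- carrier equality
    ext pbar
    rw [SetLike.mem_coe, Ideal.mem_map_iff_of_surjective ψ hψs]
    constructor
    · rintro ⟨g, hg, rfl⟩
      exact ⟨g, hg, rfl⟩
    · rintro ⟨g, hg, rfl⟩
      exact ⟨g, hg, rfl⟩
  · -- homogeneity
    intro fbar hf d
    rw [Ideal.mem_map_iff_of_surjective ψ hψs] at hf ⊢
    obtain ⟨g, hgI, rfl⟩ := hf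
    rw [Ideal.mem_comap] at hgI
    refine ⟨MvPolynomial.homogeneousComponent d g, ?_, ?_⟩
    · rw [Ideal.mem_comap, hφ, mvmap_homogeneousComponent]
      exact hIhom _ hgI d
    · rw [hψ, mvmap_homogeneousComponent]
  · -- Hilbert function
    intro d
    set W : Submodule K (MvPolynomial (Fin (n + 1)) K) := idealComponent I d with hW
    set Wb : Submodule (residueField v hv)
        (MvPolynomial (Fin (n + 1)) (residueField v hv)) :=
      idealComponent (Ideal.map ψ (I.comap φ)) d with hWb
    haveI hWfd : FiniteDimensional K W := by
      haveI := homogeneousSubmodule_finiteDimensional K (σ := Fin (n + 1)) d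
      exact Submodule.finiteDimensional_of_le
        (inf_le_left : W ≤ homogeneousSubmodule (Fin (n + 1)) K d)
    haveI hWbfd : FiniteDimensional (residueField v hv) Wb := by
      haveI := homogeneousSubmodule_finiteDimensional (residueField v hv)
        (σ := Fin (n + 1)) d
      exact Submodule.finiteDimensional_of_le
        (inf_le_left : Wb ≤ homogeneousSubmodule (Fin (n + 1)) (residueField v hv) d)
    set r : ℕ := Module.finrank K W with hr
    -- lower bound : r ≤ finrank Wb
    obtain ⟨g, ms, hgW, hg1, hg0⟩ := exists_echelon hv r W hWfd rfl
    have hψg_homog : ∀ i, ψ (g i) ∈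
        homogeneousSubmodule (Fin (n + 1)) (residueField v hv) d := by
      intro i
      have h1 : φ (g i) ∈ homogeneousSubmodule (Fin (n + 1)) K d := (hgW i).1
      have h2 : MvPolynomial.homogeneousComponent d (φ (g i)) = φ (g i) := by
        rw [MvPolynomial.homogeneousComponent_of_mem h1, if_pos rfl]
      have h3 : MvPolynomial.homogeneousComponent d (g i) = g i := by
        apply hφi
        rw [hφ, mvmap_homogeneousComponent]
        exact h2
      rw [← h3, hψ, mvmap_homogeneousComponent]
      exact MvPolynomial.homogeneousComponent_mem _ _
    have hψg_mem : ∀ i, ψ (g i) ∈ Wb := by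
      intro i
      refine ⟨hψg_homog i, ?_⟩
      show ψ (g i) ∈ Ideal.map ψ (I.comap φ)
      exact Ideal.mem_map_of_mem ψ (Ideal.mem_comap.mpr (hgW i).2)
    have hind : LinearIndependent (residueField v hv) (fun i => ψ (g i)) := by
      apply echelon_linearIndependent (fun i => ψ (g i)) ms
      · intro i
        rw [hψ]
        show MvPolynomial.coeff (ms i) (MvPolynomial.map π (g i)) = 1
        rw [MvPolynomial.coeff_map, hg1 i, map_one]
      · intro i j hji
        rw [hψ]
        show MvPolynomial.coeff (ms j) (MvPolynomial.map π (g i)) = 0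
        rw [MvPolynomial.coeff_map, hg0 i j hji, map_zero]
    have hindW : LinearIndependent (residueField v hv)
        (fun i => (⟨ψ (g i), hψg_mem i⟩ : Wb)) := by
      apply LinearIndependent.of_comp Wb.subtype
      exact hind
    have hlow : r ≤ Module.finrank (residueField v hv) Wb := by
      simpa using hindW.fintype_card_le_finrank
    -- upper bound
    set r' : ℕ := Module.finrank (residueField v hv) Wb with hr'
    haveI : Module.Free (residueField v hv) Wb := Module.Free.of_divisionRing (residueField v hv) Wb
    set B := Module.finBasis (residueField v hv) Wb with hB
    have hBmem : ∀ i : Fin r', (B i : MvPolynomial (Fin (n + 1)) (residueField v hv))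
        ∈ Ideal.map ψ (I.comap φ) := fun i => (B i).2.2
    have hBhom : ∀ i : Fin r', (B i : MvPolynomial (Fin (n + 1)) (residueField v hv))
        ∈ homogeneousSubmodule (Fin (n + 1)) (residueField v hv) d := fun i => (B i).2.1
    have hchoice : ∀ i : Fin r', ∃ g0, φ g0 ∈ I ∧
        ψ g0 = (B i : MvPolynomial (Fin (n + 1)) (residueField v hv)) := by
      intro i
      have := hBmem i
      rw [Ideal.mem_map_iff_of_surjective ψ hψs] at this
      obtain ⟨g0, hg0', hgeq⟩ := this
      exact ⟨g0, Ideal.mem_comap.mp hg0', hgeq⟩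
    choose gl hglI hglψ using hchoice
    set h : Fin r' → MvPolynomial (Fin (n + 1)) (valuationSubring v hv) :=
      fun i => MvPolynomial.homogeneousComponent d (gl i) with hh
    have hψh : ∀ i, ψ (h i) = (B i : MvPolynomial (Fin (n + 1)) (residueField v hv)) := by
      intro i
      rw [hh, hψ]
      show MvPolynomial.map π (MvPolynomial.homogeneousComponent d (gl i)) = _
      rw [mvmap_homogeneousComponent]
      have := hglψ i
      rw [hψ] at this
      rw [this]
      rw [MvPolynomial.homogeneousComponent_of_mem (hBhom i), if_pos rfl]
    have hφh_mem : ∀ i, φ (h i) ∈ W := by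
      intro i
      constructor
      · rw [hh, hφ]
        show MvPolynomial.map O.subtype (MvPolynomial.homogeneousComponent d (gl i)) ∈ _
        rw [mvmap_homogeneousComponent]
        exact MvPolynomial.homogeneousComponent_mem _ _
      · show φ (h i) ∈ I
        rw [hh, hφ]
        show MvPolynomial.map O.subtype (MvPolynomial.homogeneousComponent d (gl i)) ∈ I
        rw [mvmap_homogeneousComponent]
        exact hIhom _ (hglI i) d
    have hBind : LinearIndependent (residueField v hv)
        (fun i : Fin r' => (B i : MvPolynomial (Fin (n + 1)) (residueField v hv))) := by
      have := B.linearIndependent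
      exact this.map_injOn Wb.subtype (fun x _ y _ hxy => Subtype.ext hxy)
    have hindh : LinearIndependent (residueField v hv) (fun i => ψ (h i)) := by
      have : (fun i => ψ (h i)) = fun i : Fin r' =>
          (B i : MvPolynomial (Fin (n + 1)) (residueField v hv)) := funext hψh
      rw [this]
      exact hBind
    have hindK : LinearIndependent K (fun i => φ (h i)) := by
      have := lifts_linearIndependent hv h (by
        have h' := hindh
        rw [hψ] at h'
        exact h')
      rw [hφ]
      exact this
    have hindKW : LinearIndependent K (fun i => (⟨φ (h i), hφh_mem i⟩ : W)) := by
      apply LinearIndependent.of_comp W.subtype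
      exact hindK
    have hup : r' ≤ r := by
      simpa using hindKW.fintype_card_le_finrank
    exact le_antisymm hup hlow
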